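/- Let G = (V,E) be a finite undirected graph, M a matching in G that is not maximum. Then there exists an M-augmenting path in G (Berge's theorem), and consequently if M' is obtained from M by switching along an augmenting path P, then M' is a matching with |M'| = |M| + 1 whose set of covered vertices equals the covered vertices of M together with the two endpoints of P. -/

import Mathlib

variable {V : Type*} [Fintype V] [DecidableEq V]

/-- A matching of `G` all of whose edges lie inside the vertex set `W`
(i.e. a matching of the induced subgraph `G[W]`). -/
def IsMatchingOn (G : SimpleGraph V) (W : Set V) (M : Finset (Sym2 V)) : Prop :=
  (∀ e ∈ M, e ∈ G.edgeSet) ∧ (∀ e ∈ M, ∀ v ∈ e, v ∈ W) ∧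
  (M : Set (Sym2 V)).Pairwise fun e f => ∀ v, v ∈ e → v ∉ f

/-- Vertices covered by a set of edges. -/
def mcovered (M : Finset (Sym2 V)) : Set V := {v | ∃ e ∈ M, v ∈ e}

/-- `w(G[W])`: maximum cardinality of a matching of `G[W]`. -/
noncomputable def mmax (G : SimpleGraph V) (W : Set V) : ℕ :=
  sSup {n | ∃ M, IsMatchingOn G W M ∧ M.card = n}

/-- `w^L(G[W])`: minimum number of `L`-vertices covered over maximum matchings of `G[W]`. -/
noncomputable def mwL (G : SimpleGraph V) (L W : Set V) : ℕ :=
  sInf {k | ∃ M, IsMatchingOn G W M ∧ M.card = mmax G W ∧ (mcovered M ∩ L).ncard = k}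

/-- The edges of a path given by a vertex list. -/
def pathEdges (p : List V) : Finset (Sym2 V) :=
  ((p.zip p.tail).map fun q => s(q.1, q.2)).toFinset

/-- An `M`-augmenting path inside `W`: endpoints `M`-unmatched, edges alternating
outside/inside `M`, starting and ending with a non-matching edge. -/
def IsAugPathOn (G : SimpleGraph V) (W : Set V) (M : Finset (Sym2 V)) (p : List V) : Prop :=
  2 ≤ p.length ∧ p.Nodup ∧ p.Chain' G.Adj ∧ (∀ v ∈ p, v ∈ W) ∧
  (∀ h : p ≠ [], p.head h ∉ mcovered M ∧ p.getLast h ∉ mcovered M) ∧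
  ∀ i (h : i + 1 < p.length),
    (s(p.get ⟨i, Nat.lt_of_succ_lt h⟩, p.get ⟨i + 1, h⟩) ∈ M ↔ i % 2 = 1)

set_option linter.unusedSectionVars false
set_option linter.unusedVariables false
set_option maxHeartbeats 1000000

section Aux
variable {G : SimpleGraph V} {M N : Finset (Sym2 V)} {W : Set V}

lemma matching_unique (hM : IsMatchingOn G W M) {e f : Sym2 V} (he : e ∈ M) (hf : f ∈ M)
    {v : V} (hv : v ∈ e) (hv' : v ∈ f) : e = f := by
  by_contra hne
  exact hM.2.2 he hf hne v hv hv'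

lemma matching_not_diag (hM : IsMatchingOn G W M) {e : Sym2 V} (he : e ∈ M) : ¬ e.IsDiag :=
  G.not_isDiag_of_mem_edgeSet (hM.1 e he)

lemma mem_mcovered {v : V} : v ∈ mcovered M ↔ ∃ e ∈ M, v ∈ e := Iff.rfl

lemma mem_pathEdges {p : List V} {e : Sym2 V} :
    e ∈ pathEdges p ↔ ∃ i, ∃ h : i + 1 < p.length,
      e = s(p[i]'(Nat.lt_of_succ_lt h), p[i + 1]'h) := by
  unfold pathEdges
  rw [List.mem_toFinset, List.mem_map]
  constructor
  · rintro ⟨q, hq, rfl⟩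
    rw [List.mem_iff_getElem] at hq
    obtain ⟨i, hi, hq⟩ := hq
    have hlen : (p.zip p.tail).length = p.length - 1 := by
      simp [List.length_zip, List.length_tail]
    have hi' : i + 1 < p.length := by omega
    refine ⟨i, hi', ?_⟩
    rw [List.getElem_zip] at hq
    have ht : p.tail[i]'(by simp [List.length_tail]; omega) = p[i+1]'hi' := by
      simp [List.getElem_tail]
    rw [← hq, ht]
  · rintro ⟨i, h, rfl⟩
    have hi : i < (p.zip p.tail).length := by
      simp [List.length_zip, List.length_tail]; omega
    refine ⟨(p.zip p.tail)[i], List.getElem_mem hi, ?_⟩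
    rw [List.getElem_zip]
    simp [List.getElem_tail]

lemma pathEdge_mem {p : List V} {i : ℕ} (h : i + 1 < p.length) :
    s(p[i]'(Nat.lt_of_succ_lt h), p[i + 1]'h) ∈ pathEdges p := mem_pathEdges.2 ⟨i, h, rfl⟩

lemma nodup_idx {p : List V} (hnd : p.Nodup) {i j : ℕ} (hi : i < p.length) (hj : j < p.length)
    (h : p[i]'hi = p[j]'hj) : i = j := by
  exact (List.Nodup.getElem_inj_iff hnd).1 h

lemma mem_idx {p : List V} {v : V} (hv : v ∈ p) : ∃ i, ∃ h : i < p.length, p[i]'h = v :=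
  List.mem_iff_getElem.1 hv

lemma chain'_adj {p : List V} (hch : p.Chain' G.Adj) {i : ℕ} (h : i + 1 < p.length) :
    G.Adj (p[i]'(Nat.lt_of_succ_lt h)) (p[i+1]'h) := by
  unfold List.Chain' at hch
  rw [List.isChain_iff_getElem] at hch
  have := hch i (by omega)
  simpa [List.get_eq_getElem] using this

end Aux

section Switch
variable {G : SimpleGraph V} {M : Finset (Sym2 V)} {W : Set V} {p : List V} {s : ℕ}

/-- Any matching edge through a path vertex is either a path edge, or the vertex is an
endpoint of the path whose incident path edge is not a matching edge. -/
lemma key' (hM : IsMatchingOn G W M) (hn : 2 ≤ p.length) (hnd : p.Nodup) (hs : s < 2)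
    (halt : ∀ i (h : i + 1 < p.length),
      (s(p[i]'(Nat.lt_of_succ_lt h), p[i + 1]'h) ∈ M ↔ i % 2 = s))
    {j : ℕ} (hj : j < p.length) {e : Sym2 V} (he : e ∈ M) (hv : p[j]'hj ∈ e) :
    (j = 0 ∧ ¬ 0 % 2 = s) ∨ (j = p.length - 1 ∧ ¬ (p.length - 2) % 2 = s) ∨ e ∈ pathEdges p := by
  have hleft : 1 ≤ j → (j - 1) % 2 = s → e ∈ pathEdges p := by
    intro h1 hpar
    have h : (j - 1) + 1 < p.length := by omega
    have hedge : s(p[j-1]'(Nat.lt_of_succ_lt h), p[j-1+1]'h) ∈ M := (halt (j-1) h).2 hpar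
    have hidx : j - 1 + 1 = j := by omega
    have hget : p[j-1+1]'h = p[j]'hj := by simp only [hidx]
    have hmem : p[j]'hj ∈ s(p[j-1]'(Nat.lt_of_succ_lt h), p[j-1+1]'h) := by
      rw [hget]; exact Sym2.mem_mk_right _ _
    have := matching_unique hM he hedge hv hmem
    rw [this]; exact pathEdge_mem h
  have hright : j + 1 < p.length → j % 2 = s → e ∈ pathEdges p := by
    intro h hpar
    have hedge : s(p[j]'(Nat.lt_of_succ_lt h), p[j+1]'h) ∈ M := (halt j h).2 hpar
    have := matching_unique hM he hedge hv (Sym2.mem_mk_left _ _)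
    rw [this]; exact pathEdge_mem h
  by_cases h0 : j = 0
  · subst h0
    by_cases hp0 : 0 % 2 = s
    · exact Or.inr (Or.inr (hright (by omega) hp0))
    · exact Or.inl ⟨rfl, hp0⟩
  · by_cases hlastj : j = p.length - 1
    · by_cases hp1 : (j - 1) % 2 = s
      · exact Or.inr (Or.inr (hleft (by omega) hp1))
      · refine Or.inr (Or.inl ⟨hlastj, ?_⟩)
        have : j - 1 = p.length - 2 := by omega
        rwa [this] at hp1
    · -- interior
      have h1 : 1 ≤ j := by omega
      have h2 : j + 1 < p.length := by omega
      by_cases hp : j % 2 = s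
      · exact Or.inr (Or.inr (hright h2 hp))
      · exact Or.inr (Or.inr (hleft h1 (by omega)))

lemma key (hM : IsMatchingOn G W M) (hn : 2 ≤ p.length) (hnd : p.Nodup) (hs : s < 2)
    (halt : ∀ i (h : i + 1 < p.length),
      (s(p[i]'(Nat.lt_of_succ_lt h), p[i + 1]'h) ∈ M ↔ i % 2 = s))
    (hhead : ¬ 0 % 2 = s → p[0]'(by omega) ∉ mcovered M)
    (hlast : ¬ (p.length - 2) % 2 = s → p[p.length - 1]'(by omega) ∉ mcovered M)
    {j : ℕ} (hj : j < p.length) {e : Sym2 V} (he : e ∈ M) (hv : p[j]'hj ∈ e) :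
    e ∈ pathEdges p := by
  rcases key' hM hn hnd hs halt hj he hv with ⟨rfl, hp⟩ | ⟨hj', hp⟩ | h
  · exact absurd ⟨e, he, hv⟩ (hhead hp)
  · subst hj'
    exact absurd ⟨e, he, hv⟩ (hlast hp)
  · exact h

lemma edge_idx {p : List V} (hnd : p.Nodup) {i j : ℕ} (hi : i + 1 < p.length)
    (hj : j + 1 < p.length)
    (h : s(p[i]'(Nat.lt_of_succ_lt hi), p[i+1]'hi) = s(p[j]'(Nat.lt_of_succ_lt hj), p[j+1]'hj)) :
    i = j := by
  rw [Sym2.eq_iff] at h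
  rcases h with ⟨h1, _⟩ | ⟨h1, h2⟩
  · exact nodup_idx hnd _ _ h1
  · have e1 := nodup_idx hnd _ _ h1
    have e2 := nodup_idx hnd _ _ h2
    omega

lemma switch_matching (hM : IsMatchingOn G Set.univ M) (hn : 2 ≤ p.length) (hnd : p.Nodup)
    (hch : p.Chain' G.Adj) (hs : s < 2)
    (halt : ∀ i (h : i + 1 < p.length),
      (s(p[i]'(Nat.lt_of_succ_lt h), p[i + 1]'h) ∈ M ↔ i % 2 = s))
    (hhead : ¬ 0 % 2 = s → p[0]'(by omega) ∉ mcovered M)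
    (hlast : ¬ (p.length - 2) % 2 = s → p[p.length - 1]'(by omega) ∉ mcovered M) :
    IsMatchingOn G Set.univ (symmDiff M (pathEdges p)) := by
  have hPedge : ∀ e ∈ pathEdges p, e ∈ G.edgeSet := by
    intro e he
    obtain ⟨i, h, rfl⟩ := mem_pathEdges.1 he
    exact (SimpleGraph.mem_edgeSet G).2 (chain'_adj hch h)
  refine ⟨?_, fun _ _ _ _ => Set.mem_univ _, ?_⟩
  · intro e he
    rcases Finset.mem_symmDiff.1 he with ⟨he, _⟩ | ⟨he, _⟩
    · exact hM.1 e he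
    · exact hPedge e he
  · intro e he f hf hne v hv hv'
    rcases Finset.mem_symmDiff.1 he with ⟨heM, heP⟩ | ⟨heP, heM⟩ <;>
      rcases Finset.mem_symmDiff.1 hf with ⟨hfM, hfP⟩ | ⟨hfP, hfM⟩
    · exact hne (matching_unique hM heM hfM hv hv')
    · -- e ∈ M \ P, f ∈ P \ M
      obtain ⟨j, hj, rfl⟩ := mem_pathEdges.1 hfP
      rcases Sym2.mem_iff.1 hv' with h | h
      · exact heP (key hM hn hnd hs halt hhead hlast _ heM (h ▸ hv))
      · exact heP (key hM hn hnd hs halt hhead hlast _ heM (h ▸ hv))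
    · -- e ∈ P \ M, f ∈ M \ P
      obtain ⟨j, hj, rfl⟩ := mem_pathEdges.1 heP
      rcases Sym2.mem_iff.1 hv with h | h
      · exact hfP (key hM hn hnd hs halt hhead hlast _ hfM (h ▸ hv'))
      · exact hfP (key hM hn hnd hs halt hhead hlast _ hfM (h ▸ hv'))
    · -- both in P \ M
      obtain ⟨i, hi, rfl⟩ := mem_pathEdges.1 heP
      obtain ⟨j, hj, rfl⟩ := mem_pathEdges.1 hfP
      have hij : ¬ i = j := fun h => hne (by subst h; rfl)
      have hpar : ¬ i % 2 = s := fun h => heM ((halt i hi).2 h)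
      have hpar' : ¬ j % 2 = s := fun h => hfM ((halt j hj).2 h)
      rcases Sym2.mem_iff.1 hv with h1 | h1 <;> rcases Sym2.mem_iff.1 hv' with h2 | h2 <;>
        · have := nodup_idx hnd _ _ (h1.symm.trans h2)
          omega

end Switch

section Cards
variable {G : SimpleGraph V} {M : Finset (Sym2 V)} {p : List V} {s : ℕ}

lemma count_odd (m : ℕ) : ((Finset.range m).filter (fun i => i % 2 = 1)).card = m / 2 := by
  induction m with
  | zero => simp
  | succ k ih =>
    rw [Finset.range_add_one, Finset.filter_insert]
    by_cases h : k % 2 = 1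
    · rw [if_pos h, Finset.card_insert_of_notMem (by simp)]
      omega
    · rw [if_neg h]
      omega

lemma count_range_filter (m : ℕ) (q : ℕ → Prop) [DecidablePred q] :
    ((Finset.range m).filter q).card + ((Finset.range m).filter (fun i => ¬ q i)).card = m := by
  rw [Finset.card_filter_add_card_filter_not, Finset.card_range]

lemma switch_card (hn : 2 ≤ p.length) (hnd : p.Nodup)
    (halt : ∀ i (h : i + 1 < p.length),
      (s(p[i]'(Nat.lt_of_succ_lt h), p[i + 1]'h) ∈ M ↔ i % 2 = s)) :
    (symmDiff M (pathEdges p)).card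
      + ((Finset.range (p.length - 1)).filter (fun i => i % 2 = s)).card
    = M.card + ((Finset.range (p.length - 1)).filter (fun i => ¬ i % 2 = s)).card := by
  classical
  have hv0 : 0 < p.length := by omega
  set v0 : V := p[0]'hv0 with hv0def
  set f : ℕ → Sym2 V := fun i => s(p.getD i v0, p.getD (i+1) v0) with hfdef
  have hf : ∀ i (h : i + 1 < p.length),
      f i = s(p[i]'(Nat.lt_of_succ_lt h), p[i + 1]'h) := by
    intro i h
    simp only [hfdef]
    rw [List.getD_eq_getElem _ _ (Nat.lt_of_succ_lt h), List.getD_eq_getElem _ _ h]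
  have hinj : ∀ i ∈ Finset.range (p.length - 1), ∀ j ∈ Finset.range (p.length - 1),
      f i = f j → i = j := by
    intro i hi j hj h
    rw [Finset.mem_range] at hi hj
    have hi' : i + 1 < p.length := by omega
    have hj' : j + 1 < p.length := by omega
    rw [hf i hi', hf j hj'] at h
    exact edge_idx hnd hi' hj' h
  have hmemf : ∀ e, e ∈ pathEdges p ↔ ∃ i, i < p.length - 1 ∧ e = f i := by
    intro e
    rw [mem_pathEdges]
    constructor
    · rintro ⟨i, h, rfl⟩; exact ⟨i, by omega, (hf i h).symm⟩
    · rintro ⟨i, hi, rfl⟩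
      have h : i + 1 < p.length := by omega
      exact ⟨i, h, hf i h⟩
  have hMP : M ∩ pathEdges p
      = ((Finset.range (p.length - 1)).filter (fun i => i % 2 = s)).image f := by
    ext e
    simp only [Finset.mem_inter, Finset.mem_image, Finset.mem_filter, Finset.mem_range]
    constructor
    · rintro ⟨heM, heP⟩
      obtain ⟨i, hi, rfl⟩ := (hmemf e).1 heP
      have h : i + 1 < p.length := by omega
      refine ⟨i, ⟨hi, ?_⟩, rfl⟩
      rw [hf i h] at heM
      exact (halt i h).1 heM
    · rintro ⟨i, ⟨hi, hpar⟩, rfl⟩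
      have h : i + 1 < p.length := by omega
      rw [hf i h]
      exact ⟨(halt i h).2 hpar, pathEdge_mem h⟩
  have hPM : pathEdges p \ M
      = ((Finset.range (p.length - 1)).filter (fun i => ¬ i % 2 = s)).image f := by
    ext e
    simp only [Finset.mem_sdiff, Finset.mem_image, Finset.mem_filter, Finset.mem_range]
    constructor
    · rintro ⟨heP, heM⟩
      obtain ⟨i, hi, rfl⟩ := (hmemf e).1 heP
      have h : i + 1 < p.length := by omega
      refine ⟨i, ⟨hi, ?_⟩, rfl⟩
      intro hpar
      exact heM ((hf i h ▸ halt i h).2 hpar)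
    · rintro ⟨i, ⟨hi, hpar⟩, rfl⟩
      have h : i + 1 < p.length := by omega
      refine ⟨(hmemf _).2 ⟨i, hi, rfl⟩, ?_⟩
      intro hM'
      exact hpar ((hf i h ▸ halt i h).1 hM')
  have c1 : (M ∩ pathEdges p).card
      = ((Finset.range (p.length - 1)).filter (fun i => i % 2 = s)).card := by
    rw [hMP]
    apply Finset.card_image_of_injOn
    intro i hi j hj
    exact hinj i (Finset.mem_of_mem_filter _ hi) j (Finset.mem_of_mem_filter _ hj)
  have c2 : (pathEdges p \ M).card
      = ((Finset.range (p.length - 1)).filter (fun i => ¬ i % 2 = s)).card := by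
    rw [hPM]
    apply Finset.card_image_of_injOn
    intro i hi j hj
    exact hinj i (Finset.mem_of_mem_filter _ hi) j (Finset.mem_of_mem_filter _ hj)
  have hsd : symmDiff M (pathEdges p) = (M \ pathEdges p) ∪ (pathEdges p \ M) := by
    ext e
    rw [Finset.mem_symmDiff, Finset.mem_union, Finset.mem_sdiff, Finset.mem_sdiff]
  have hdisj : Disjoint (M \ pathEdges p) (pathEdges p \ M) := by
    rw [Finset.disjoint_left]
    intro e he he'
    exact (Finset.mem_sdiff.1 he).2 (Finset.mem_sdiff.1 he').1
  have hc : (symmDiff M (pathEdges p)).card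
      = (M \ pathEdges p).card + (pathEdges p \ M).card := by
    rw [hsd, Finset.card_union_of_disjoint hdisj]
  have hms : (M \ pathEdges p).card + (M ∩ pathEdges p).card = M.card :=
    Finset.card_sdiff_add_card_inter M (pathEdges p)
  omega

lemma switch_covered (hM : IsMatchingOn G Set.univ M) (hn : 2 ≤ p.length) (hnd : p.Nodup)
    (heven : p.length % 2 = 0)
    (halt : ∀ i (h : i + 1 < p.length),
      (s(p[i]'(Nat.lt_of_succ_lt h), p[i + 1]'h) ∈ M ↔ i % 2 = 1)) :
    mcovered (symmDiff M (pathEdges p))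
      = mcovered M ∪ {p[0]'(by omega), p[p.length - 1]'(by omega)} := by
  have hcov : ∀ i (h : i + 1 < p.length), ¬ i % 2 = 1 →
      (p[i]'(Nat.lt_of_succ_lt h)) ∈ mcovered (symmDiff M (pathEdges p))
      ∧ (p[i+1]'h) ∈ mcovered (symmDiff M (pathEdges p)) := by
    intro i h hpar
    have hmem : s(p[i]'(Nat.lt_of_succ_lt h), p[i + 1]'h) ∈ symmDiff M (pathEdges p) :=
      Finset.mem_symmDiff.2 (Or.inr ⟨pathEdge_mem h, fun hm => hpar ((halt i h).1 hm)⟩)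
    exact ⟨⟨_, hmem, Sym2.mem_mk_left _ _⟩, ⟨_, hmem, Sym2.mem_mk_right _ _⟩⟩
  ext v
  constructor
  · rintro ⟨g, hg, hvg⟩
    rcases Finset.mem_symmDiff.1 hg with ⟨hgM, hgP⟩ | ⟨hgP, hgM⟩
    · exact Or.inl ⟨g, hgM, hvg⟩
    · obtain ⟨i, h, rfl⟩ := mem_pathEdges.1 hgP
      have hpar : ¬ i % 2 = 1 := fun hp => hgM ((halt i h).2 hp)
      rcases Sym2.mem_iff.1 hvg with rfl | rfl
      · by_cases hi0 : i = 0
        · subst hi0; exact Or.inr (Or.inl rfl)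
        · -- i even ≥ 2, edge i-1 ∈ M
          have h1 : (i - 1) + 1 < p.length := by omega
          have hM1 : s(p[i-1]'(Nat.lt_of_succ_lt h1), p[i-1+1]'h1) ∈ M :=
            (halt (i-1) h1).2 (by omega)
          refine Or.inl ⟨_, hM1, ?_⟩
          have : p[i-1+1]'h1 = p[i]'(Nat.lt_of_succ_lt h) := by
            simp only [Nat.sub_add_cancel (by omega : 1 ≤ i)]
          rw [this]
          exact Sym2.mem_mk_right _ _
      · by_cases hil : i + 1 = p.length - 1
        · have hidx : p[i+1]'h = p[p.length-1]'(by omega) := by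
            simp only [hil]
          exact Or.inr (Or.inr hidx)
        · have h1 : (i + 1) + 1 < p.length := by omega
          have hM1 : s(p[i+1]'(Nat.lt_of_succ_lt h1), p[i+1+1]'h1) ∈ M :=
            (halt (i+1) h1).2 (by omega)
          exact Or.inl ⟨_, hM1, Sym2.mem_mk_left _ _⟩
  · intro hv
    rcases hv with ⟨f, hf, hvf⟩ | hv
    · by_cases hfP : f ∈ pathEdges p
      · obtain ⟨i, h, rfl⟩ := mem_pathEdges.1 hfP
        have hpar : i % 2 = 1 := (halt i h).1 hf
        have hi1 : 1 ≤ i := by omega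
        have hine : ¬ i = p.length - 2 := by omega
        rcases Sym2.mem_iff.1 hvf with rfl | rfl
        · have h1 : (i - 1) + 1 < p.length := by omega
          have := (hcov (i-1) h1 (by omega)).2
          have hidx : p[i-1+1]'h1 = p[i]'(Nat.lt_of_succ_lt h) := by
            simp only [Nat.sub_add_cancel hi1]
          rwa [hidx] at this
        · have h1 : (i + 1) + 1 < p.length := by omega
          exact (hcov (i+1) h1 (by omega)).1
      · exact ⟨f, Finset.mem_symmDiff.2 (Or.inl ⟨hf, hfP⟩), hvf⟩
    · rcases hv with rfl | rfl
      · exact (hcov 0 (by omega) (by omega)).1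
      · have h1 : (p.length - 2) + 1 < p.length := by omega
        have := (hcov (p.length - 2) h1 (by omega)).2
        have hidx : p[p.length-2+1]'h1 = p[p.length-1]'(by omega) := by
          simp only [show p.length - 2 + 1 = p.length - 1 by omega]
        rwa [hidx] at this

end Cards

section Uncov
variable {G : SimpleGraph V} {M N : Finset (Sym2 V)}

lemma cov_card (hM : IsMatchingOn G Set.univ M) :
    (M.biUnion (fun e => Finset.univ.filter (· ∈ e))).card = 2 * M.card := by
  rw [Finset.card_biUnion]
  · rw [Finset.sum_congr rfl (fun e he => ?_), Finset.sum_const, smul_eq_mul, mul_comm]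
    · have hd := matching_not_diag hM he
      induction e using Sym2.ind with
      | _ a b =>
        have hab : a ≠ b := fun h => hd (by simp [h])
        have : Finset.univ.filter (· ∈ s(a, b)) = {a, b} := by
          ext v; simp [Sym2.mem_iff]
        rw [this, Finset.card_insert_of_notMem (by simp [hab]), Finset.card_singleton]
  · intro e he f hf hne
    rw [Function.onFun, Finset.disjoint_left]
    intro v hv hv'
    rw [Finset.mem_filter] at hv hv'
    exact hM.2.2 he hf hne v hv.2 hv'.2

lemma exists_uncov (hM : IsMatchingOn G Set.univ M) (hN : IsMatchingOn G Set.univ N)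
    (h : M.card < N.card) : ∃ v, v ∈ mcovered N ∧ v ∉ mcovered M := by
  by_contra hc
  push_neg at hc
  have hsub : N.biUnion (fun e => Finset.univ.filter (· ∈ e))
      ⊆ M.biUnion (fun e => Finset.univ.filter (· ∈ e)) := by
    intro v hv
    rw [Finset.mem_biUnion] at hv ⊢
    obtain ⟨e, he, hv⟩ := hv
    obtain ⟨f, hf, hvf⟩ := hc v ⟨e, he, (Finset.mem_filter.1 hv).2⟩
    exact ⟨f, hf, Finset.mem_filter.2 ⟨Finset.mem_univ _, hvf⟩⟩
  have := Finset.card_le_card hsub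
  rw [cov_card hM, cov_card hN] at this
  omega

end Uncov

section Berge
variable {G : SimpleGraph V} {M N : Finset (Sym2 V)} {v0 : V} {p : List V}

def GoodPath (G : SimpleGraph V) (M N : Finset (Sym2 V)) (v0 : V) (p : List V) : Prop :=
  (∃ h : 0 < p.length, p[0]'h = v0) ∧ p.Nodup ∧ p.Chain' G.Adj ∧
  (∀ i (h : i + 1 < p.length), (s(p[i]'(Nat.lt_of_succ_lt h), p[i+1]'h) ∈ M ↔ i % 2 = 1)) ∧
  (∀ i (h : i + 1 < p.length), (s(p[i]'(Nat.lt_of_succ_lt h), p[i+1]'h) ∈ N ↔ i % 2 = 0))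

lemma good_extend (hp : GoodPath G M N v0 p) (h0 : 0 < p.length)
    {w : V} (hw : w ∉ p) (hadj : G.Adj (p[p.length-1]'(by omega)) w)
    (hM' : s(p[p.length-1]'(by omega), w) ∈ M ↔ (p.length - 1) % 2 = 1)
    (hN' : s(p[p.length-1]'(by omega), w) ∈ N ↔ (p.length - 1) % 2 = 0) :
    GoodPath G M N v0 (p ++ [w]) := by
  obtain ⟨⟨h0', hhead⟩, hnd, hch, haltM, haltN⟩ := hp
  have hlen : (p ++ [w]).length = p.length + 1 := by simp
  have hgetlt : ∀ i (h : i < p.length), (p ++ [w])[i]'(by simp; omega) = p[i]'h := by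
    intro i h
    rw [List.getElem_append_left h]
  have hedge : ∀ i, i = p.length - 1 → ∀ (h : i + 1 < (p ++ [w]).length),
      s((p ++ [w])[i]'(Nat.lt_of_succ_lt h), (p ++ [w])[i+1]'h)
        = s(p[p.length-1]'(by omega), w) := by
    intro i hi h
    have h1 : (p ++ [w])[i]'(by simp; omega) = p[p.length-1]'(by omega) := by
      rw [hgetlt i (by omega)]
      simp only [hi]
    have h2 : (p ++ [w])[i+1]'(by simp; omega) = w := by
      have hieq : i + 1 = p.length := by omega
      simp [hieq]
    rw [h1, h2]
  refine ⟨⟨by simp, by rw [hgetlt 0 h0']; exact hhead⟩, ?_, ?_, ?_, ?_⟩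
  · rw [List.nodup_append]
    exact ⟨hnd, List.nodup_singleton w, fun a ha b hb => by
      simp at hb; subst hb; exact fun h => hw (h ▸ ha)⟩
  · unfold List.Chain'
    rw [List.isChain_iff_getElem]
    intro i hi
    rw [hlen] at hi
    by_cases h' : i + 1 < p.length
    · rw [hgetlt i (by omega), hgetlt (i+1) h']
      exact chain'_adj hch h'
    · have h1 : (p ++ [w])[i]'(by simp; omega) = p[p.length-1]'(by omega) := by
        rw [hgetlt i (by omega)]
        simp only [show i = p.length - 1 by omega]
      have h2 : (p ++ [w])[i+1]'(by simp; omega) = w := by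
        simp [show i + 1 = p.length by omega]
      rw [h1, h2]
      exact hadj
  · intro i h
    by_cases h' : i + 1 < p.length
    · rw [hgetlt i (by omega), hgetlt (i+1) h']
      exact haltM i h'
    · rw [hedge i (by rw [hlen] at h; omega) h]
      have hi : i = p.length - 1 := by rw [hlen] at h; omega
      rw [hi]
      exact hM'
  · intro i h
    by_cases h' : i + 1 < p.length
    · rw [hgetlt i (by omega), hgetlt (i+1) h']
      exact haltN i h'
    · rw [hedge i (by rw [hlen] at h; omega) h]
      have hi : i = p.length - 1 := by rw [hlen] at h; omega
      rw [hi]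
      exact hN'

lemma good_dichotomy (hM : IsMatchingOn G Set.univ M) (hN : IsMatchingOn G Set.univ N)
    (hv0 : v0 ∉ mcovered M) (hp : GoodPath G M N v0 p) (h0 : 0 < p.length)
    (hmax : ∀ q, GoodPath G M N v0 q → q.length ≤ p.length) :
    (p.length % 2 = 0 ∧ p[p.length - 1]'(by omega) ∉ mcovered M)
    ∨ (p.length % 2 = 1 ∧ p[p.length - 1]'(by omega) ∉ mcovered N) := by
  have hgood := hp
  obtain ⟨⟨h0', hhead⟩, hnd, hch, haltM, haltN⟩ := hp
  by_cases hpar : p.length % 2 = 0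
  · left
    refine ⟨hpar, ?_⟩
    rintro ⟨f, hfM, hzf⟩
    obtain ⟨w, rfl⟩ := Sym2.mem_iff_exists.1 hzf
    have hn2 : 2 ≤ p.length := by omega
    have hwz : ¬ w = p[p.length-1]'(by omega) := by
      intro h
      exact matching_not_diag hM hfM (by rw [h]; simp)
    have hprevlt : (p.length - 2) + 1 < p.length := by omega
    have hix : p[p.length-2+1]'hprevlt = p[p.length-1]'(by omega) := by
      simp only [show p.length-2+1 = p.length-1 by omega]
    have hzprev : p[p.length-1]'(by omega)
        ∈ s(p[p.length-2]'(Nat.lt_of_succ_lt hprevlt), p[p.length-2+1]'hprevlt) := by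
      rw [hix]; exact Sym2.mem_mk_right _ _
    have hfN : s(p[p.length-1]'(by omega), w) ∉ N := by
      intro hfN
      have hprevN := (haltN (p.length-2) hprevlt).2 (by omega)
      have hfeq := matching_unique hN hfN hprevN (Sym2.mem_mk_left _ _) hzprev
      rw [hfeq] at hfM
      have := (haltM (p.length-2) hprevlt).1 hfM
      omega
    have hwp : w ∉ p := by
      intro hwp
      obtain ⟨j, hj, hjw⟩ := mem_idx hwp
      have hwf : p[j]'hj ∈ s(p[p.length-1]'(by omega), w) := by
        rw [hjw]; exact Sym2.mem_mk_right _ _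
      rcases key' hM hn2 hnd (by omega) haltM hj hfM hwf with ⟨hj0, _⟩ | ⟨hjl, _⟩ | hfP
      · subst hj0
        exact hv0 ⟨_, hfM, by rw [← hhead]; exact hwf⟩
      · subst hjl
        exact hwz hjw.symm
      · obtain ⟨i, hi, hfe⟩ := mem_pathEdges.1 hfP
        have hiodd : i % 2 = 1 := (haltM i hi).1 (hfe ▸ hfM)
        have hzf' : p[p.length-1]'(by omega)
            ∈ s(p[i]'(Nat.lt_of_succ_lt hi), p[i+1]'hi) := hfe ▸ (Sym2.mem_mk_left _ _)
        rcases Sym2.mem_iff.1 hzf' with h | h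
        · have := nodup_idx hnd _ _ h; omega
        · have := nodup_idx hnd _ _ h; omega
    have hadj : G.Adj (p[p.length-1]'(by omega)) w :=
      (SimpleGraph.mem_edgeSet G).1 (hM.1 _ hfM)
    have hq := good_extend hgood h0 hwp hadj
      (iff_of_true hfM (by omega)) (iff_of_false hfN (by omega))
    have := hmax _ hq
    simp at this
  · right
    refine ⟨by omega, ?_⟩
    rintro ⟨f, hfN, hzf⟩
    obtain ⟨w, rfl⟩ := Sym2.mem_iff_exists.1 hzf
    have hwz : ¬ w = p[p.length-1]'(by omega) := by
      intro h
      exact matching_not_diag hN hfN (by rw [h]; simp)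
    have hfM : s(p[p.length-1]'(by omega), w) ∉ M := by
      by_cases h1 : p.length = 1
      · intro hfM
        refine hv0 ⟨_, hfM, ?_⟩
        have : p[p.length-1]'(by omega) = v0 := by
          rw [← hhead]
          simp only [show p.length - 1 = 0 by omega]
        rw [← this]
        exact Sym2.mem_mk_left _ _
      · intro hfM
        have hprevlt : (p.length - 2) + 1 < p.length := by omega
        have hix : p[p.length-2+1]'hprevlt = p[p.length-1]'(by omega) := by
          simp only [show p.length-2+1 = p.length-1 by omega]
        have hzprev : p[p.length-1]'(by omega)
            ∈ s(p[p.length-2]'(Nat.lt_of_succ_lt hprevlt), p[p.length-2+1]'hprevlt) := by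
          rw [hix]; exact Sym2.mem_mk_right _ _
        have hprevM := (haltM (p.length-2) hprevlt).2 (by omega)
        have hfeq := matching_unique hM hfM hprevM (Sym2.mem_mk_left _ _) hzprev
        rw [hfeq] at hfN
        have := (haltN (p.length-2) hprevlt).1 hfN
        omega
    have hwp : w ∉ p := by
      intro hwp
      obtain ⟨j, hj, hjw⟩ := mem_idx hwp
      by_cases h1 : p.length = 1
      · apply hwz
        rw [← hjw]
        congr 1
        omega
      · have hn2 : 2 ≤ p.length := by omega
        have hwf : p[j]'hj ∈ s(p[p.length-1]'(by omega), w) := by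
          rw [hjw]; exact Sym2.mem_mk_right _ _
        rcases key' hN hn2 hnd (by omega) haltN hj hfN hwf with ⟨_, hq0⟩ | ⟨hjl, _⟩ | hfP
        · exact hq0 rfl
        · subst hjl
          exact hwz hjw.symm
        · obtain ⟨i, hi, hfe⟩ := mem_pathEdges.1 hfP
          have hieven : i % 2 = 0 := (haltN i hi).1 (hfe ▸ hfN)
          have hzf' : p[p.length-1]'(by omega)
              ∈ s(p[i]'(Nat.lt_of_succ_lt hi), p[i+1]'hi) := hfe ▸ (Sym2.mem_mk_left _ _)
          rcases Sym2.mem_iff.1 hzf' with h | h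
          · have := nodup_idx hnd _ _ h; omega
          · have := nodup_idx hnd _ _ h; omega
    have hadj : G.Adj (p[p.length-1]'(by omega)) w :=
      (SimpleGraph.mem_edgeSet G).1 (hN.1 _ hfN)
    have hq := good_extend hgood h0 hwp hadj
      (iff_of_false hfM (by omega)) (iff_of_true hfN (by omega))
    have := hmax _ hq
    simp at this

lemma exists_max_good :
    ∃ p, GoodPath G M N v0 p ∧ ∀ q, GoodPath G M N v0 q → q.length ≤ p.length := by
  set S : Set ℕ := {m | ∃ p, GoodPath G M N v0 p ∧ p.length = m} with hS
  have h1 : 1 ∈ S := by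
    refine ⟨[v0], ⟨⟨by simp, by simp⟩, List.nodup_singleton v0, List.isChain_singleton v0,
      ?_, ?_⟩, rfl⟩ <;>
    · intro i h
      simp at h
  have hbdd : BddAbove S := by
    refine ⟨Fintype.card V, ?_⟩
    rintro m ⟨p, hp, rfl⟩
    exact hp.2.1.length_le_card
  have hmem := Nat.sSup_mem ⟨1, h1⟩ hbdd
  obtain ⟨p, hp, hl⟩ := hmem
  refine ⟨p, hp, fun q hq => ?_⟩
  rw [hl]
  exact le_csSup hbdd ⟨q, hq, rfl⟩

end Berge

section Final
variable {G : SimpleGraph V} {M N : Finset (Sym2 V)}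

lemma count_parity (m s : ℕ) :
    ((Finset.range m).filter (fun i => i % 2 = s)).card
      + ((Finset.range m).filter (fun i => ¬ i % 2 = s)).card = m := by
  rw [Finset.card_filter_add_card_filter_not, Finset.card_range]

lemma berge_aux (hM : IsMatchingOn G Set.univ M) :
    ∀ d (N : Finset (Sym2 V)), IsMatchingOn G Set.univ N → M.card < N.card →
      (symmDiff M N).card ≤ d → ∃ p, IsAugPathOn G Set.univ M p := by
  intro d
  induction d using Nat.strong_induction_on with
  | _ d ih =>
  intro N hN hlt hcard
  obtain ⟨v0, hv0N, hv0M⟩ := exists_uncov hM hN hlt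
  obtain ⟨p, hp, hmax⟩ := exists_max_good (G := G) (M := M) (N := N) (v0 := v0)
  have hgood := hp
  obtain ⟨⟨h0, hhead⟩, hnd, hch, haltM, haltN⟩ := hp
  rcases good_dichotomy hM hN hv0M hgood h0 hmax with ⟨heven, hz⟩ | ⟨hodd, hz⟩
  · refine ⟨p, by omega, hnd, hch, fun v _ => Set.mem_univ v, fun hne => ?_, ?_⟩
    · constructor
      · rw [List.head_eq_getElem_zero hne, hhead]
        exact hv0M
      · rw [List.getLast_eq_getElem hne]
        exact hz
    · intro i h
      simp only [List.get_eq_getElem]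
      exact haltM i h
  · by_cases h1 : p.length = 1
    · exfalso
      apply hz
      have : p[p.length - 1]'(by omega) = v0 := by
        rw [← hhead]
        simp only [show p.length - 1 = 0 by omega]
      rw [this]
      exact hv0N
    · have hn3 : 3 ≤ p.length := by omega
      have hNmatch := switch_matching (M := N) hN (by omega) hnd hch (s := 0) (by omega)
        haltN (fun hc => absurd rfl hc) (fun _ => hz)
      have hcN := switch_card (M := N) (s := 0) (by omega) hnd haltN
      have hBeq : ((Finset.range (p.length - 1)).filter (fun i => ¬ i % 2 = 0))
          = ((Finset.range (p.length - 1)).filter (fun i => i % 2 = 1)) := by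
        apply Finset.filter_congr
        intro x _
        constructor <;> (intro h; omega)
      have hB := count_odd (p.length - 1)
      have hA := count_parity (p.length - 1) 0
      rw [hBeq] at hcN hA
      have hNcard : (symmDiff N (pathEdges p)).card = N.card := by omega
      have hsub : pathEdges p ⊆ symmDiff M N := by
        intro e he
        obtain ⟨i, hi, rfl⟩ := mem_pathEdges.1 he
        by_cases hip : i % 2 = 0
        · exact Finset.mem_symmDiff.2 (Or.inr ⟨(haltN i hi).2 hip,
            fun hm => by have := (haltM i hi).1 hm; omega⟩)
        · exact Finset.mem_symmDiff.2 (Or.inl ⟨(haltM i hi).2 (by omega),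
            fun hn' => by have := (haltN i hi).1 hn'; omega⟩)
      have hassoc : symmDiff M (symmDiff N (pathEdges p))
          = symmDiff (symmDiff M N) (pathEdges p) := (symmDiff_assoc M N (pathEdges p)).symm
      have hge : symmDiff (symmDiff M N) (pathEdges p) = symmDiff M N \ pathEdges p :=
        symmDiff_of_ge (Finset.le_iff_subset.2 hsub)
      have hPpos : 0 < (pathEdges p).card :=
        Finset.card_pos.2 ⟨_, pathEdge_mem (show 0 + 1 < p.length by omega)⟩
      have hle := Finset.card_le_card hsub
      have hcard2 : (symmDiff M (symmDiff N (pathEdges p))).card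
          = (symmDiff M N).card - (pathEdges p).card := by
        rw [hassoc, hge, Finset.card_sdiff_of_subset hsub]
      exact ih (d - 1) (by omega) (symmDiff N (pathEdges p)) hNmatch (by omega) (by omega)

end Final

theorem stmt1 (G : SimpleGraph V) (M : Finset (Sym2 V))
    (hM : IsMatchingOn G Set.univ M) (hnotmax : M.card < mmax G Set.univ) :
    ∃ p, IsAugPathOn G Set.univ M p ∧
      IsMatchingOn G Set.univ (symmDiff M (pathEdges p)) ∧
      (symmDiff M (pathEdges p)).card = M.card + 1 ∧
      ∀ h : p ≠ [],
        mcovered (symmDiff M (pathEdges p)) =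
          mcovered M ∪ {p.head h, p.getLast h} := by
  classical
  have hSne : {n | ∃ M', IsMatchingOn G Set.univ M' ∧ M'.card = n}.Nonempty :=
    ⟨0, ∅, ⟨by simp, by simp, by simp⟩, rfl⟩
  have hbdd : BddAbove {n | ∃ M', IsMatchingOn G Set.univ M' ∧ M'.card = n} := by
    refine ⟨Fintype.card (Sym2 V), ?_⟩
    rintro n ⟨M', _, rfl⟩
    exact (Finset.card_le_univ M').trans_eq Finset.card_univ
  have hmem := Nat.sSup_mem hSne hbdd
  obtain ⟨N, hN, hNcard⟩ := hmem
  have hlt : M.card < N.card := by rw [hNcard]; exact hnotmax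
  obtain ⟨p, haug⟩ := berge_aux hM (symmDiff M N).card N hN hlt le_rfl
  obtain ⟨hlen2, hnd, hch, _, hends, halt⟩ := haug
  have hne : p ≠ [] := List.ne_nil_of_length_pos (by omega)
  obtain ⟨hheadcov, hlastcov⟩ := hends hne
  have haltM : ∀ i (h : i + 1 < p.length),
      (s(p[i]'(Nat.lt_of_succ_lt h), p[i+1]'h) ∈ M ↔ i % 2 = 1) := by
    intro i h
    have := halt i h
    simpa only [List.get_eq_getElem] using this
  have hheadg : p.head hne = p[0]'(by omega) := List.head_eq_getElem_zero hne
  have hlastg : p.getLast hne = p[p.length-1]'(by omega) := List.getLast_eq_getElem hne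
  have heven : p.length % 2 = 0 := by
    by_contra hodd
    have hlt2 : (p.length - 2) + 1 < p.length := by omega
    have hpar2 : (p.length - 2) % 2 = 1 := by omega
    have hmem2 := (haltM (p.length - 2) hlt2).2 hpar2
    refine absurd ?_ hlastcov
    rw [hlastg]
    refine ⟨_, hmem2, ?_⟩
    have : p[p.length-2+1]'hlt2 = p[p.length-1]'(by omega) := by
      simp only [show p.length - 2 + 1 = p.length - 1 by omega]
    rw [this]
    exact Sym2.mem_mk_right _ _
  have hhead0 : p[0]'(by omega) ∉ mcovered M := hheadg ▸ hheadcov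
  have hlast0 : p[p.length-1]'(by omega) ∉ mcovered M := hlastg ▸ hlastcov
  have hmatch := switch_matching hM hlen2 hnd hch (s := 1) (by omega) haltM
    (fun _ => hhead0) (fun _ => hlast0)
  have hcS := switch_card (M := M) (s := 1) hlen2 hnd haltM
  have hB := count_odd (p.length - 1)
  have hA := count_parity (p.length - 1) 1
  have hcard1 : (symmDiff M (pathEdges p)).card = M.card + 1 := by omega
  have hcov := switch_covered hM hlen2 hnd heven haltM
  refine ⟨p, ⟨hlen2, hnd, hch, fun v _ => Set.mem_univ v, hends, halt⟩, hmatch, hcard1, ?_⟩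
  intro h
  rw [hcov, List.head_eq_getElem_zero h, List.getLast_eq_getElem h]
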